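/- Let s ∈ (0,1) and let Ω ⊂ ℝ² be a measurable set of finite Lebesgue measure. Then ∬_{Ω×Ω} |x − y|^(−2s) dx dy ≤ (π^s/(1−s)) · L²(Ω)^(2−s). -/

import Mathlib

open Real MeasureTheory Set

lemma ball_vol2 (x : EuclideanSpace ℝ (Fin 2)) (r : ℝ) :
    volume (Metric.ball x r) = ENNReal.ofReal r ^ 2 * ENNReal.ofReal π := by
  rw [EuclideanSpace.volume_ball]
  norm_num [Fintype.card_fin]
  rw [← ENNReal.ofReal_pow (Real.sqrt_nonneg _), sq_sqrt Real.pi_pos.le]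

lemma inner_bound (s : ℝ) (hs0 : 0 < s) (hs1 : s < 1)
    (Ω : Set (EuclideanSpace ℝ (Fin 2))) (hΩ : MeasurableSet Ω)
    (hfin : volume Ω < ⊤) (hm0 : volume Ω ≠ 0) (x : EuclideanSpace ℝ (Fin 2)) :
    ∫⁻ y in Ω, ENNReal.ofReal (dist x y ^ (-(2 * s))) ≤
      ENNReal.ofReal (π ^ s * (volume Ω).toReal ^ (1 - s) / (1 - s)) := by
  set M := (volume Ω).toReal with hM
  have hMpos : 0 < M := ENNReal.toReal_pos hm0 hfin.ne
  have hπ := Real.pi_pos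
  set t₀ : ℝ := (π / M) ^ s with ht₀def
  have ht₀pos : 0 < t₀ := Real.rpow_pos_of_pos (by positivity) _
  have f_nn : 0 ≤ᵐ[volume.restrict Ω] fun y => dist x y ^ (-(2 * s)) :=
    Filter.Eventually.of_forall fun y => Real.rpow_nonneg dist_nonneg _
  have f_mble : AEMeasurable (fun y => dist x y ^ (-(2 * s))) (volume.restrict Ω) := by
    fun_prop
  rw [lintegral_eq_lintegral_meas_lt _ f_nn f_mble]
  have hsplit : Ioi (0 : ℝ) = Ioc 0 t₀ ∪ Ioi t₀ := (Ioc_union_Ioi_eq_Ioi ht₀pos.le).symm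
  rw [hsplit, lintegral_union measurableSet_Ioi Ioc_disjoint_Ioi_same]
  -- first piece
  have h1 : ∫⁻ t in Ioc 0 t₀, (volume.restrict Ω) {y | t < dist x y ^ (-(2 * s))} ≤
      ENNReal.ofReal (M * t₀) := by
    calc ∫⁻ t in Ioc 0 t₀, (volume.restrict Ω) {y | t < dist x y ^ (-(2 * s))}
        ≤ ∫⁻ _ in Ioc 0 t₀, volume Ω := by
          refine lintegral_mono fun t => ?_
          calc (volume.restrict Ω) {y | t < dist x y ^ (-(2 * s))} ≤
              (volume.restrict Ω) univ := measure_mono (subset_univ _)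
            _ = volume Ω := by simp [Measure.restrict_apply_univ]
      _ = volume Ω * volume (Ioc 0 t₀) := setLIntegral_const _ _
      _ = ENNReal.ofReal M * ENNReal.ofReal t₀ := by
          rw [Real.volume_Ioc, sub_zero]
          congr 1
          exact (ENNReal.ofReal_toReal hfin.ne).symm
      _ = ENNReal.ofReal (M * t₀) := (ENNReal.ofReal_mul hMpos.le).symm
  -- second piece
  have hexp : -s⁻¹ < -1 := by
    rw [neg_lt_neg_iff]
    exact (one_lt_inv_iff₀).2 ⟨hs0, hs1⟩
  have h2 : ∫⁻ t in Ioi t₀, (volume.restrict Ω) {y | t < dist x y ^ (-(2 * s))} ≤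
      ENNReal.ofReal (π * (t₀ ^ (-s⁻¹ + 1) / (s⁻¹ - 1))) := by
    have hsub : ∀ t : ℝ, 0 < t →
        {y : EuclideanSpace ℝ (Fin 2) | t < dist x y ^ (-(2 * s))} ⊆
          Metric.ball x (t ^ (-(2 * s))⁻¹) := by
      intro t ht y hy
      simp only [mem_setOf_eq] at hy
      have hd : (0 : ℝ) < dist x y := by
        rcases eq_or_lt_of_le (dist_nonneg : (0:ℝ) ≤ dist x y) with h | h
        · rw [← h, Real.zero_rpow (by intro h'; nlinarith : -(2*s) ≠ 0)] at hy
          exact absurd (ht.trans hy) (lt_irrefl 0)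
        · exact h
      have hz : (-(2 * s))⁻¹ < 0 := inv_lt_zero.mpr (by linarith)
      have := Real.rpow_lt_rpow_of_neg ht hy hz
      rw [← Real.rpow_mul hd.le, mul_inv_cancel₀ (by intro h'; nlinarith : -(2*s) ≠ 0),
        Real.rpow_one] at this
      rw [Metric.mem_ball, dist_comm]
      exact this
    calc ∫⁻ t in Ioi t₀, (volume.restrict Ω) {y | t < dist x y ^ (-(2 * s))}
        ≤ ∫⁻ t in Ioi t₀, ENNReal.ofReal (π * t ^ (-s⁻¹)) := by
          refine setLIntegral_mono' measurableSet_Ioi fun t ht => ?_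
          have ht' : 0 < t := ht₀pos.trans ht
          calc (volume.restrict Ω) {y | t < dist x y ^ (-(2 * s))}
              ≤ volume {y | t < dist x y ^ (-(2 * s))} := Measure.restrict_le_self _
            _ ≤ volume (Metric.ball x (t ^ (-(2 * s))⁻¹)) :=
                measure_mono (hsub t ht')
            _ = ENNReal.ofReal (t ^ (-(2 * s))⁻¹) ^ 2 * ENNReal.ofReal π := ball_vol2 _ _
            _ = ENNReal.ofReal (π * t ^ (-s⁻¹)) := by
                rw [← ENNReal.ofReal_pow (Real.rpow_nonneg ht'.le _),
                  ← ENNReal.ofReal_mul (by positivity), mul_comm]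
                congr 2
                rw [← Real.rpow_natCast (t ^ (-(2 * s))⁻¹) 2, ← Real.rpow_mul ht'.le]
                congr 1
                field_simp
                norm_num
      _ = ENNReal.ofReal (π * (t₀ ^ (-s⁻¹ + 1) / (s⁻¹ - 1))) := by
          have hint : IntegrableOn (fun t : ℝ => t ^ (-s⁻¹)) (Ioi t₀) :=
            integrableOn_Ioi_rpow_of_lt hexp ht₀pos
          rw [← ofReal_integral_eq_lintegral_ofReal (hint.const_mul π) ?_]
          swap
          · filter_upwards [self_mem_ae_restrict (measurableSet_Ioi : MeasurableSet (Ioi t₀))]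
              with t ht
            have ht' : 0 < t := ht₀pos.trans ht
            positivity
          rw [MeasureTheory.integral_const_mul, integral_Ioi_rpow_of_lt hexp ht₀pos]
          congr 1
          rw [neg_div, ← div_neg, neg_add, neg_neg, ← sub_eq_add_neg]
  refine (add_le_add h1 h2).trans ?_
  have hinv : 1 < s⁻¹ := one_lt_inv_iff₀.2 ⟨hs0, hs1⟩
  have hterm2 : 0 ≤ π * (t₀ ^ (-s⁻¹ + 1) / (s⁻¹ - 1)) :=
    mul_nonneg hπ.le (div_nonneg (Real.rpow_nonneg ht₀pos.le _) (by linarith))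
  rw [← ENNReal.ofReal_add (by positivity) hterm2]
  apply ENNReal.ofReal_le_ofReal
  -- pure real computation
  have hs' : (1:ℝ) - s ≠ 0 := by linarith
  have e1 : t₀ = π ^ s / M ^ s := Real.div_rpow hπ.le hMpos.le s
  have e2 : t₀ ^ (-s⁻¹ + 1) = (π / M) ^ (s * (-s⁻¹ + 1)) := by
    rw [ht₀def, ← Real.rpow_mul (by positivity)]
  have e3 : s * (-s⁻¹ + 1) = s - 1 := by
    rw [mul_add, mul_neg, mul_inv_cancel₀ (ne_of_gt hs0), mul_one]
    ring
  have e4 : (π / M) ^ (s - 1) = (π ^ s / π) / (M ^ s / M) := by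
    rw [Real.div_rpow hπ.le hMpos.le, Real.rpow_sub hπ, Real.rpow_sub hMpos,
      Real.rpow_one, Real.rpow_one]
  have e5 : M ^ (1 - s) = M / M ^ s := by
    rw [Real.rpow_sub hMpos, Real.rpow_one]
  have hπs : (0:ℝ) < π ^ s := Real.rpow_pos_of_pos hπ _
  have hMs : (0:ℝ) < M ^ s := Real.rpow_pos_of_pos hMpos _
  have hsinv : s⁻¹ - 1 = (1 - s) / s := by field_simp
  have h1s : (0:ℝ) < 1 - s := by linarith
  rw [e2, e3, e4, e1, e5, hsinv]
  apply le_of_eq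
  field_simp
  ring

theorem stmt9 (s : ℝ) (hs0 : 0 < s) (hs1 : s < 1)
    (Ω : Set (EuclideanSpace ℝ (Fin 2))) (hΩ : MeasurableSet Ω)
    (hfin : volume Ω < ⊤) :
    ∫⁻ x in Ω, ∫⁻ y in Ω, ENNReal.ofReal (dist x y ^ (-(2 * s))) ≤
      ENNReal.ofReal (Real.pi ^ s / (1 - s)) * (volume Ω) ^ (2 - s) := by
  rcases eq_or_ne (volume Ω) 0 with hm0 | hm0
  · rw [Measure.restrict_eq_zero.mpr hm0]
    simp
  have hMpos : 0 < (volume Ω).toReal := ENNReal.toReal_pos hm0 hfin.ne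
  calc ∫⁻ x in Ω, ∫⁻ y in Ω, ENNReal.ofReal (dist x y ^ (-(2 * s)))
      ≤ ∫⁻ _ in Ω, ENNReal.ofReal (π ^ s * (volume Ω).toReal ^ (1 - s) / (1 - s)) :=
        lintegral_mono fun x => inner_bound s hs0 hs1 Ω hΩ hfin hm0 x
    _ = ENNReal.ofReal (π ^ s * (volume Ω).toReal ^ (1 - s) / (1 - s)) * volume Ω :=
        setLIntegral_const _ _
    _ = ENNReal.ofReal (Real.pi ^ s / (1 - s)) * (volume Ω) ^ (2 - s) := by
        have hvol : volume Ω = ENNReal.ofReal (volume Ω).toReal :=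
          (ENNReal.ofReal_toReal hfin.ne).symm
        have h2 : (volume Ω) ^ (2 - s) =
            volume Ω * ENNReal.ofReal ((volume Ω).toReal ^ (1 - s)) := by
          rw [show (2:ℝ) - s = 1 + (1 - s) by ring,
            ENNReal.rpow_add _ _ hm0 hfin.ne, ENNReal.rpow_one]
          congr 1
          conv_lhs => rw [hvol]
          rw [ENNReal.ofReal_rpow_of_pos hMpos]
        rw [h2, show ENNReal.ofReal (π ^ s / (1 - s)) *
            (volume Ω * ENNReal.ofReal ((volume Ω).toReal ^ (1 - s))) =
            (ENNReal.ofReal (π ^ s / (1 - s)) *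
              ENNReal.ofReal ((volume Ω).toReal ^ (1 - s))) * volume Ω from by ring]
        congr 1
        rw [← ENNReal.ofReal_mul
          (div_nonneg (Real.rpow_nonneg Real.pi_pos.le s) (by linarith))]
        congr 1
        ring
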